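/- Let R be a commutative ring of prime characteristic p that is finitely generated as an algebra over a perfect field k. Then the ring of k-linear differential operators on R equals the union over n ≥ 0 of End_{R^{p^n}}(R), where R^{p^n} is the subring of p^n-th powers. In particular, D_k(R) is independent of the base perfect field k. -/

import Mathlib

/-!
STATEMENT 2.  Let `k` be a perfect field of characteristic `p > 0` and `R` a finitely
generated `k`-algebra.  The ring of `k`-linear differential operators `D_k(R) ⊆ End_k(R)`
is defined inductively: `D⁰ = R` (acting by multiplication) and `φ ∈ Dⁿ⁺¹` iff
`[φ, r] ∈ Dⁿ` for all `r ∈ R`; `D_k(R) = ⋃ₙ Dⁿ`.  Then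
`D_k(R) = ⋃ₙ End_{R^{pⁿ}}(R)`, where an element of `End_{R^{pⁿ}}(R)` is an endomorphism
`φ` with `φ(r^{pⁿ} x) = r^{pⁿ} φ(x)` for all `r, x ∈ R`.
(In particular `D_k(R)` does not depend on the perfect base field `k`.)
-/

/-- The filtration of `End_k(R)` by order of differential operators:
`D⁰` consists of multiplication operators, and `φ ∈ Dⁿ⁺¹` iff all commutators
`[φ, r] = φ ∘ (r·) - (r·) ∘ φ` lie in `Dⁿ`. -/
def DiffOpFilt (k R : Type*) [CommRing k] [CommRing R] [Algebra k R] :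
    ℕ → Set (R →ₗ[k] R)
  | 0 => Set.range fun r : R => r • (LinearMap.id : R →ₗ[k] R)
  | n + 1 => {φ | ∀ r : R,
      φ.comp (r • (LinearMap.id : R →ₗ[k] R)) - r • φ ∈ DiffOpFilt k R n}

/-- The ring of `k`-linear (Grothendieck) differential operators on `R`,
as a subset of `End_k(R)`. -/
def DiffOps (k R : Type*) [CommRing k] [CommRing R] [Algebra k R] :
    Set (R →ₗ[k] R) :=
  {φ | ∃ n : ℕ, φ ∈ DiffOpFilt k R n}

namespace DiffOpsAux

variable {k R : Type*} [CommRing k] [CommRing R] [Algebra k R]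

/-- Right multiplication operator on `End_k R`. -/
def Rop (r : R) : Module.End k (R →ₗ[k] R) where
  toFun φ := φ.comp (r • LinearMap.id)
  map_add' φ ψ := by ext x; simp
  map_smul' c φ := by ext x; simp

/-- Left multiplication operator on `End_k R`. -/
def Lop (r : R) : Module.End k (R →ₗ[k] R) where
  toFun φ := r • φ
  map_add' φ ψ := by ext x; simp [mul_add]
  map_smul' c φ := by
    ext x
    simp [smul_eq_mul, mul_smul_comm]

/-- The commutator-with-`r` operator. -/
def delta (r : R) : Module.End k (R →ₗ[k] R) := Rop r - Lop r

lemma delta_apply (r : R) (φ : R →ₗ[k] R) :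
    delta r φ = φ.comp (r • (LinearMap.id : R →ₗ[k] R)) - r • φ := rfl

lemma delta_apply_apply (r : R) (φ : R →ₗ[k] R) (x : R) :
    delta r φ x = φ (r * x) - r * φ x := by
  simp [delta, Rop, Lop, smul_eq_mul]

lemma rop_apply_apply (r : R) (φ : R →ₗ[k] R) (x : R) : Rop r φ x = φ (r * x) := by
  simp [Rop, smul_eq_mul]

lemma lop_apply_apply (r : R) (φ : R →ₗ[k] R) (x : R) : Lop r φ x = r * φ x := by
  simp [Lop, smul_eq_mul]

lemma rop_mul (r s : R) : (Rop (r * s) : Module.End k (R →ₗ[k] R)) = Rop r * Rop s := by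
  ext φ x
  simp [rop_apply_apply, Module.End.mul_apply, mul_left_comm, mul_assoc]

lemma lop_mul (r s : R) : (Lop (r * s) : Module.End k (R →ₗ[k] R)) = Lop r * Lop s := by
  ext φ x
  simp [lop_apply_apply, Module.End.mul_apply, mul_assoc]

lemma rop_add (r s : R) : (Rop (r + s) : Module.End k (R →ₗ[k] R)) = Rop r + Rop s := by
  ext φ x
  simp [rop_apply_apply, add_mul, map_add]

lemma lop_add (r s : R) : (Lop (r + s) : Module.End k (R →ₗ[k] R)) = Lop r + Lop s := by
  ext φ x
  simp [lop_apply_apply, add_mul]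

lemma rop_comm (r s : R) : Commute (Rop r : Module.End k (R →ₗ[k] R)) (Rop s) := by
  rw [Commute, SemiconjBy, ← rop_mul, ← rop_mul, mul_comm]

lemma lop_comm (r s : R) : Commute (Lop r : Module.End k (R →ₗ[k] R)) (Lop s) := by
  rw [Commute, SemiconjBy, ← lop_mul, ← lop_mul, mul_comm]

lemma lop_rop_comm (r s : R) : Commute (Lop r : Module.End k (R →ₗ[k] R)) (Rop s) := by
  apply LinearMap.ext; intro φ; apply LinearMap.ext; intro x
  simp [Module.End.mul_apply, rop_apply_apply, lop_apply_apply]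

lemma rop_pow (r : R) (n : ℕ) : (Rop (r ^ n) : Module.End k (R →ₗ[k] R)) = (Rop r) ^ n := by
  induction n with
  | zero => ext φ x; simp [rop_apply_apply]
  | succ n ih => rw [pow_succ, pow_succ, ← ih, ← rop_mul]

lemma lop_pow (r : R) (n : ℕ) : (Lop (r ^ n) : Module.End k (R →ₗ[k] R)) = (Lop r) ^ n := by
  induction n with
  | zero => ext φ x; simp [lop_apply_apply]
  | succ n ih => rw [pow_succ, pow_succ, ← ih, ← lop_mul]

lemma delta_add (r s : R) : (delta (r + s) : Module.End k (R →ₗ[k] R)) = delta r + delta s := by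
  unfold delta; rw [rop_add, lop_add]; abel

lemma delta_mul (r s : R) :
    (delta (r * s) : Module.End k (R →ₗ[k] R)) = delta r * Rop s + Lop r * delta s := by
  unfold delta
  rw [rop_mul, lop_mul]
  ext φ x
  simp [Module.End.mul_apply, rop_apply_apply, lop_apply_apply]

lemma delta_algebraMap (c : k) : (delta (algebraMap k R c) : Module.End k (R →ₗ[k] R)) = 0 := by
  ext φ x
  rw [delta_apply_apply, ← Algebra.smul_def, map_smul, ← Algebra.smul_def, sub_self]
  rfl

lemma delta_pow_char (p : ℕ) [Fact p.Prime] [CharP (Module.End k (R →ₗ[k] R)) p]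
    (r : R) (e : ℕ) :
    (delta (r ^ p ^ e) : Module.End k (R →ₗ[k] R)) = (delta r) ^ p ^ e := by
  unfold delta
  rw [rop_pow, lop_pow]
  exact (sub_pow_char_pow_of_commute (R := Module.End k (R →ₗ[k] R)) p e ((lop_rop_comm r r).symm)).symm

/-- Operators of order `n` are killed by `n+1`-fold commutators. -/
lemma delta_pow_apply_eq_zero : ∀ (n : ℕ) (φ : R →ₗ[k] R),
    φ ∈ DiffOpFilt k R n → ∀ r : R, ((delta r) ^ (n + 1)) φ = 0
  | 0, φ, h, r => by
    obtain ⟨s, rfl⟩ := h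
    rw [pow_one]
    ext x
    simp only [delta_apply_apply, LinearMap.smul_apply, LinearMap.id_coe, id_eq,
      smul_eq_mul, LinearMap.zero_apply]
    ring
  | n + 1, φ, h, r => by
    rw [pow_succ, Module.End.mul_apply]
    exact delta_pow_apply_eq_zero n _ (h r) r

/-- Conversely, an operator killed by all `n+1`-fold commutators has order `≤ n`. -/
lemma mem_filt_of_lists : ∀ (n : ℕ) (φ : R →ₗ[k] R),
    (∀ l : List R, l.length = n + 1 → ((l.map (delta : R → Module.End k (R →ₗ[k] R))).prod) φ = 0) →
    φ ∈ DiffOpFilt k R n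
  | 0, φ, h => by
    refine ⟨φ 1, ?_⟩
    ext x
    have h1 := LinearMap.congr_fun (h [x] rfl) 1
    simp only [List.map_cons, List.map_nil, List.prod_cons, List.prod_nil, mul_one,
      delta_apply_apply, mul_one, LinearMap.zero_apply] at h1
    have h2 : φ x = x * φ 1 := by
      have := sub_eq_zero.mp h1
      simpa using this
    simp [h2, mul_comm]
  | n + 1, φ, h => by
    intro r
    rw [← delta_apply]
    refine mem_filt_of_lists n _ (fun l hl => ?_)
    have h2 := h (l ++ [r]) (by simp [hl])
    rw [List.map_append, List.prod_append] at h2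
    simpa [Module.End.mul_apply] using h2

end DiffOpsAux


set_option maxHeartbeats 1000000 in
set_option synthInstance.maxHeartbeats 400000 in
open DiffOpsAux in
theorem diffOps_eq_iUnion_end_frobenius_powers
    (k R : Type*) [Field k] [PerfectField k] [CommRing R] [Algebra k R]
    (p : ℕ) [Fact p.Prime] [CharP k p] [CharP R p] [Algebra.FiniteType k R] :
    DiffOps k R =
      ⋃ n : ℕ, {φ : R →ₗ[k] R | ∀ r x : R, φ (r ^ p ^ n * x) = r ^ p ^ n * φ x} := by
  classical
  haveI : Nontrivial R := CharP.nontrivial_of_char_ne_one (Fact.out : p.Prime).ne_one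
  haveI : Nontrivial (R →ₗ[k] R) :=
    ⟨LinearMap.id, 0, fun h => one_ne_zero (α := R) (by simpa using LinearMap.congr_fun h 1)⟩
  haveI : Nontrivial (Module.End k (R →ₗ[k] R)) :=
    ⟨1, 0, fun h => one_ne_zero (α := R)
      (by simpa using LinearMap.congr_fun (LinearMap.congr_fun h LinearMap.id) 1)⟩
  haveI : CharP (Module.End k (R →ₗ[k] R)) p :=
    charP_of_injective_algebraMap' (A := Module.End k (R →ₗ[k] R)) k p
  ext φ
  simp only [Set.mem_iUnion, Set.mem_setOf_eq]
  constructor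
  · -- easy direction
    rintro ⟨n, hn⟩
    refine ⟨n, fun r x => ?_⟩
    have hnp : n + 1 ≤ p ^ n := Nat.lt_pow_self (n := n) (Fact.out : p.Prime).one_lt
    have h0 : ((delta r : Module.End k (R →ₗ[k] R)) ^ (p ^ n)) φ = 0 := by
      rw [← Nat.sub_add_cancel hnp, pow_add, Module.End.mul_apply,
        delta_pow_apply_eq_zero n φ hn r, map_zero]
    have h1 : (delta (r ^ p ^ n) : Module.End k (R →ₗ[k] R)) φ = 0 := by
      rw [delta_pow_char p r n]; exact h0
    have h2 := LinearMap.congr_fun h1 x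
    rw [delta_apply_apply] at h2
    simpa [sub_eq_zero] using h2
  · -- hard direction
    rintro ⟨e, he⟩
    obtain ⟨t, ht⟩ := (inferInstance : Algebra.FiniteType k R).1
    set Sc : Set (Module.End k (R →ₗ[k] R)) :=
      Set.range (Rop : R → Module.End k (R →ₗ[k] R)) ∪ Set.range Lop with hSc
    have hcomm : ∀ a ∈ Sc, ∀ b ∈ Sc, a * b = b * a := by
      rintro a (⟨r, rfl⟩ | ⟨r, rfl⟩) b (⟨s, rfl⟩ | ⟨s, rfl⟩)
      · exact (rop_comm r s).eq
      · exact ((lop_rop_comm s r).symm).eq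
      · exact (lop_rop_comm r s).eq
      · exact (lop_comm r s).eq
    have hc : ∀ a ∈ Sc, ∀ b ∈ Sc, a * b = b * a := hcomm
    letI : CommRing (Algebra.adjoin k Sc) := @Algebra.adjoinCommRingOfComm k _ _ _ _ Sc hc
    have hRmem : ∀ r : R, (Rop r : Module.End k (R →ₗ[k] R)) ∈ Algebra.adjoin k Sc :=
      fun r => Algebra.subset_adjoin (Or.inl ⟨r, rfl⟩)
    have hLmem : ∀ r : R, (Lop r : Module.End k (R →ₗ[k] R)) ∈ Algebra.adjoin k Sc :=
      fun r => Algebra.subset_adjoin (Or.inr ⟨r, rfl⟩)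
    have hDmem : ∀ r : R, (delta r : Module.End k (R →ₗ[k] R)) ∈ Algebra.adjoin k Sc :=
      fun r => by
        have e : (delta r : Module.End k (R →ₗ[k] R)) = Rop r + (-1 : k) • Lop r := by
          ext φ x
          simp [delta_apply_apply, rop_apply_apply, lop_apply_apply, sub_eq_add_neg]
        rw [e]
        exact Subalgebra.add_mem _ (hRmem r) (Subalgebra.smul_mem _ (hLmem r) (-1 : k))
    set dB : R → Algebra.adjoin k Sc := fun r => ⟨delta r, hDmem r⟩ with hdB
    -- the annihilator of φ
    set Ann : Ideal (Algebra.adjoin k Sc) :=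
      { carrier := {b | (b : Module.End k (R →ₗ[k] R)) φ = 0}
        add_mem' := by
          intro a b ha hb
          simp only [Set.mem_setOf_eq] at *
          rw [Subalgebra.coe_add, LinearMap.add_apply, ha, hb, add_zero]
        zero_mem' := by simp
        smul_mem' := by
          intro c b hb
          simp only [Set.mem_setOf_eq] at *
          rw [smul_eq_mul, Subalgebra.coe_mul, Module.End.mul_apply, hb, map_zero] } with hAnn
    set J : Ideal (Algebra.adjoin k Sc) := Ideal.span (dB '' ↑t) with hJ
    have memAnn : ∀ b : Algebra.adjoin k Sc,
        b ∈ Ann ↔ (b : Module.End k (R →ₗ[k] R)) φ = 0 := fun b => Iff.rfl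
    have hgen_nil : ∀ y : R, (dB y) ^ (p ^ e) ∈ Ann := by
      intro y
      rw [memAnn]
      have hcoe : (((dB y) ^ (p ^ e) : Algebra.adjoin k Sc) : Module.End k (R →ₗ[k] R))
          = (delta y) ^ (p ^ e) := by
        rw [SubmonoidClass.coe_pow]
      rw [hcoe, ← delta_pow_char p y e]
      ext x
      rw [delta_apply_apply, he y x, sub_self]
      rfl
    have hJrad : J ≤ Ann.radical := by
      rw [hJ, Ideal.span_le]
      rintro _ ⟨y, _, rfl⟩
      exact Ideal.mem_radical_iff.mpr ⟨p ^ e, hgen_nil y⟩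
    have hJfg : J.FG := Submodule.fg_span (t.finite_toSet.image dB)
    obtain ⟨N, hN⟩ := Ideal.exists_pow_le_of_le_radical_of_fg hJrad hJfg
    have hdJ : ∀ r : R, dB r ∈ J := by
      intro r
      have hr : r ∈ Algebra.adjoin k (↑t : Set R) := by rw [ht]; trivial
      refine Algebra.adjoin_induction (fun x hx => ?_) (fun c => ?_)
        (fun x y _ _ hx hy => ?_) (fun x y _ _ hx hy => ?_) hr
      · exact Ideal.subset_span ⟨x, hx, rfl⟩
      · have h0 : dB (algebraMap k R c) = 0 := Subtype.ext (delta_algebraMap c)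
        rw [h0]; exact J.zero_mem
      · have h0 : dB (x + y) = dB x + dB y := Subtype.ext (delta_add x y)
        rw [h0]; exact J.add_mem hx hy
      · have h0 : dB (x * y)
            = dB x * ⟨Rop y, hRmem y⟩ + (⟨Lop x, hLmem x⟩ : Algebra.adjoin k Sc) * dB y :=
          Subtype.ext (delta_mul x y)
        rw [h0]
        exact J.add_mem (Ideal.mul_mem_right _ _ hx) (Ideal.mul_mem_left _ _ hy)
    -- products of length N+1 of deltas kill φ
    have hprod : ∀ L : List (Algebra.adjoin k Sc), (∀ b ∈ L, b ∈ J) → L.prod ∈ J ^ L.length := by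
      intro L
      induction L with
      | nil => intro _; simp [Ideal.one_eq_top]
      | cons a L ih =>
        intro hmem
        rw [List.prod_cons, List.length_cons, pow_succ']
        exact Ideal.mul_mem_mul (hmem a (by simp)) (ih fun b hb => hmem b (List.mem_cons_of_mem a hb))
    refine ⟨N, mem_filt_of_lists N φ (fun l hl => ?_)⟩
    have h1 : (l.map dB).prod ∈ J ^ (N + 1) := by
      have := hprod (l.map dB) (by rintro b hb; obtain ⟨r, _, rfl⟩ := List.mem_map.mp hb; exact hdJ r)
      rwa [List.length_map, hl] at this
    have h2 : (l.map dB).prod ∈ Ann := hN (Ideal.pow_le_pow_right (Nat.le_succ N) h1)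
    have h3 : ∀ l' : List R, (((l'.map dB).prod : Algebra.adjoin k Sc) : Module.End k (R →ₗ[k] R))
        = (l'.map (delta : R → Module.End k (R →ₗ[k] R))).prod := by
      intro l'
      induction l' with
      | nil => simp
      | cons a l' ih => simp [List.map_cons, List.prod_cons, MulMemClass.coe_mul, ih]; rfl
    have h4 : (((l.map dB).prod : Algebra.adjoin k Sc) : Module.End k (R →ₗ[k] R)) φ = 0 :=
      (memAnn _).mp h2
    rwa [h3 l] at h4
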